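/- Let L be a differential graded Lie algebra and Z_{n,j,k} as in Getzler's Lemma (an iterated-bracket sum over S_{n+1} involving two D insertions, graded symmetrized with Koszul signs). If j + k + 1 < n then Z_{n,j,k} = Z_{n,j+1,k} + Z_{n,j,k+1}. -/

import Mathlib

section

open Finset
open Fin.NatCast

variable {V : Type*} [AddCommGroup V] [Module ℚ V]

noncomputable def koszulSgn (n : ℕ) (d : Fin (n + 1) → ℤ)
    (σ : Equiv.Perm (Fin (n + 1))) : ℚ :=
  ∏ pq ∈ Finset.univ.filter
      (fun pq : Fin (n + 1) × Fin (n + 1) => pq.1 < pq.2 ∧ σ pq.2 < σ pq.1),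
    (-1 : ℚ) ^ (d (σ pq.1) * d (σ pq.2))

def iterBr (br : V →ₗ[ℚ] V →ₗ[ℚ] V) (x : V) (g : ℕ → V) (lo len : ℕ) : V :=
  ((List.range' lo len).map g).foldl (fun y z => br y z) x

noncomputable def Zval (br : V →ₗ[ℚ] V →ₗ[ℚ] V) (δ : V →ₗ[ℚ] V)
    (n : ℕ) (d : Fin (n + 1) → ℤ) (a : Fin (n + 1) → V) (j k : ℕ) : V :=
  ∑ σ : Equiv.Perm (Fin (n + 1)),
    (koszulSgn n d σ *
        (-1 : ℚ) ^ (∑ m ∈ Finset.Icc 1 j, d (σ (m : Fin (n + 1))))) •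
      iterBr br
        (br (iterBr br (if d (σ 0) = 1 then δ (a (σ 0)) else 0)
                (fun m => a (σ (m : Fin (n + 1)))) 1 j)
            (iterBr br
              (if d (σ ((j + 1 : ℕ) : Fin (n + 1))) = 1
                then δ (a (σ ((j + 1 : ℕ) : Fin (n + 1)))) else 0)
              (fun m => a (σ (m : Fin (n + 1)))) (j + 2) k))
        (fun m => a (σ (m : Fin (n + 1)))) (j + k + 2) (n - (j + k + 1))

/-! ### iterBr lemmas -/

namespace iterBr
variable (br : V →ₗ[ℚ] V →ₗ[ℚ] V)

lemma succ_len (x : V) (g lo len) :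
    iterBr br x g lo (len+1) = br (iterBr br x g lo len) (g (lo+len)) := by
  unfold iterBr
  rw [List.range'_concat, List.map_append, List.foldl_append]
  simp

lemma cons_len (x : V) (g lo len) :
    iterBr br x g lo (len+1) = iterBr br (br x (g lo)) g (lo+1) len := by
  unfold iterBr
  rw [List.range'_succ, List.map_cons, List.foldl_cons]

lemma zero (g lo len) : iterBr br 0 g lo len = 0 := by
  induction len with
  | zero => rfl
  | succ m ih => rw [succ_len, ih, map_zero]; rfl

lemma add (x y : V) (g lo len) :
    iterBr br (x + y) g lo len = iterBr br x g lo len + iterBr br y g lo len := by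
  induction len with
  | zero => rfl
  | succ m ih => rw [succ_len, succ_len, succ_len, ih, map_add]; rfl

lemma smul (c : ℚ) (x : V) (g lo len) :
    iterBr br (c • x) g lo len = c • iterBr br x g lo len := by
  induction len with
  | zero => rfl
  | succ m ih => rw [succ_len, succ_len, ih, map_smul]; rfl

lemma congr (x : V) (g1 g2 : ℕ → V) (lo1 lo2 len : ℕ)
    (h : ∀ i < len, g1 (lo1 + i) = g2 (lo2 + i)) :
    iterBr br x g1 lo1 len = iterBr br x g2 lo2 len := by
  induction len generalizing x with
  | zero => rfl
  | succ m ih =>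
      rw [succ_len, succ_len, ih _ (fun i hi => h i (by omega)), h m (by omega)]

lemma mem (H : ℤ → Submodule ℚ V)
    (hbr : ∀ {i j : ℤ} {a b : V}, a ∈ H i → b ∈ H j → br a b ∈ H (i + j))
    (x : V) (g : ℕ → V) (e : ℕ → ℤ) (lo len : ℕ) (ix : ℤ)
    (hx : x ∈ H ix) (hg : ∀ i ∈ Finset.Ico lo (lo + len), g i ∈ H (e i)) :
    iterBr br x g lo len ∈ H (ix + ∑ i ∈ Finset.Ico lo (lo + len), e i) := by
  induction len generalizing x ix with
  | zero => simpa [iterBr] using hx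
  | succ m ih =>
      rw [succ_len]
      have h1 : iterBr br x g lo m ∈ H (ix + ∑ i ∈ Finset.Ico lo (lo + m), e i) :=
        ih x ix hx (fun i hi => hg i (by simp at hi ⊢; omega))
      have h2 : g (lo + m) ∈ H (e (lo + m)) := hg _ (by simp)
      have := hbr h1 h2
      have hs : ∑ i ∈ Finset.Ico lo (lo + (m+1)), e i
          = (∑ i ∈ Finset.Ico lo (lo + m), e i) + e (lo + m) := by
        rw [show lo + (m+1) = (lo + m) + 1 by omega, Finset.sum_Ico_succ_top (by omega)]
      rw [hs, ← add_assoc]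
      exact this

end iterBr

/-! ### sign lemmas -/

namespace sgn
lemma mul (m l : ℤ) : (-1:ℚ)^m * (-1:ℚ)^l = (-1:ℚ)^(m+l) :=
  (zpow_add₀ (by norm_num) m l).symm
lemma sq (m : ℤ) : (-1:ℚ)^m * (-1:ℚ)^m = 1 := by
  rw [mul]; exact Even.neg_one_zpow ⟨m, rfl⟩
lemma congr' (m l : ℤ) (h : Even (m - l)) : (-1:ℚ)^m = (-1:ℚ)^l := by
  rw [show m = (m - l) + l by ring, ← mul, h.neg_one_zpow, one_mul]
end sgn

lemma koszulSgn_filter (n : ℕ) (d : Fin (n + 1) → ℤ) (σ : Equiv.Perm (Fin (n + 1))) :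
    koszulSgn n d σ = ∏ pq ∈ Finset.univ.filter
      (fun pq : Fin (n + 1) × Fin (n + 1) => pq.1 < pq.2),
      (if σ pq.2 < σ pq.1 then (-1 : ℚ) ^ (d (σ pq.1) * d (σ pq.2)) else 1) := by
  rw [koszulSgn, Finset.prod_filter, Finset.prod_filter]
  apply Finset.prod_congr rfl
  intro pq _
  by_cases h1 : pq.1 < pq.2 <;> by_cases h2 : σ pq.2 < σ pq.1 <;> simp [h1, h2]

lemma koszulSgn_mul (n : ℕ) (d : Fin (n + 1) → ℤ) (σ c : Equiv.Perm (Fin (n + 1))) :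
    koszulSgn n d (σ * c) = koszulSgn n d σ *
      ∏ pq ∈ Finset.univ.filter
        (fun pq : Fin (n + 1) × Fin (n + 1) => pq.1 < pq.2 ∧ c⁻¹ pq.2 < c⁻¹ pq.1),
        (-1 : ℚ) ^ (d (σ pq.1) * d (σ pq.2)) := by
  rw [koszulSgn_filter, koszulSgn_filter]
  have key : ∏ pq ∈ Finset.univ.filter
      (fun pq : Fin (n + 1) × Fin (n + 1) => pq.1 < pq.2),
      (if (σ * c) pq.2 < (σ * c) pq.1 then (-1 : ℚ) ^ (d ((σ * c) pq.1) * d ((σ * c) pq.2)) else 1)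
    = ∏ rs ∈ Finset.univ.filter
      (fun rs : Fin (n + 1) × Fin (n + 1) => rs.1 < rs.2),
      ((if σ rs.2 < σ rs.1 then (-1 : ℚ) ^ (d (σ rs.1) * d (σ rs.2)) else 1) *
       (if c⁻¹ rs.2 < c⁻¹ rs.1 then (-1 : ℚ) ^ (d (σ rs.1) * d (σ rs.2)) else 1)) := by
    apply Finset.prod_nbij'
      (i := fun pq => if c pq.1 < c pq.2 then (c pq.1, c pq.2) else (c pq.2, c pq.1))
      (j := fun rs => if c⁻¹ rs.1 < c⁻¹ rs.2 then (c⁻¹ rs.1, c⁻¹ rs.2) else (c⁻¹ rs.2, c⁻¹ rs.1))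
    · intro pq hpq
      simp only [Finset.mem_filter, Finset.mem_univ, true_and] at hpq ⊢
      by_cases h : c pq.1 < c pq.2
      · simpa [h] using h
      · have : c pq.2 ≠ c pq.1 := fun he => absurd (c.injective he) (by omega)
        simp only [h, if_false]
        omega
    · intro rs hrs
      simp only [Finset.mem_filter, Finset.mem_univ, true_and] at hrs ⊢
      by_cases h : c⁻¹ rs.1 < c⁻¹ rs.2
      · simp only [if_pos h]; exact h
      · have : c⁻¹ rs.2 ≠ c⁻¹ rs.1 := fun he => absurd (c⁻¹.injective he) (by omega)
        simp only [h, if_false]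
        omega
    · intro pq hpq
      simp only [Finset.mem_filter, Finset.mem_univ, true_and] at hpq
      by_cases h : c pq.1 < c pq.2
      · simp [h, hpq]
      · have h2 : c pq.2 < c pq.1 := by
          have : c pq.2 ≠ c pq.1 := fun he => absurd (c.injective he) (by omega)
          omega
        simp only [h, if_false]
        simp [not_lt.mpr (le_of_lt h2), Equiv.Perm.inv_def, Equiv.symm_apply_apply]
        omega
    · intro rs hrs
      simp only [Finset.mem_filter, Finset.mem_univ, true_and] at hrs
      by_cases h : c⁻¹ rs.1 < c⁻¹ rs.2
      · simp only [if_pos h]; simp [hrs]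
      · have h2 : c⁻¹ rs.2 < c⁻¹ rs.1 := by
          have : c⁻¹ rs.2 ≠ c⁻¹ rs.1 := fun he => absurd (c⁻¹.injective he) (by omega)
          omega
        simp only [h, if_false]
        simp [not_lt.mpr (le_of_lt h2), Equiv.Perm.inv_def, Equiv.apply_symm_apply]
        omega
    · intro pq hpq
      simp only [Finset.mem_filter, Finset.mem_univ, true_and] at hpq
      by_cases h : c pq.1 < c pq.2
      · simp only [h, if_true, Equiv.Perm.mul_apply, Equiv.Perm.inv_def, Equiv.symm_apply_apply]
        have : ¬ pq.2 < pq.1 := by omega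
        simp [this]
        exact if_congr Iff.rfl rfl rfl
      · have h2 : c pq.2 < c pq.1 := by
          have : c pq.2 ≠ c pq.1 := fun he => absurd (c.injective he) (by omega)
          omega
        simp only [h, if_false, Equiv.Perm.mul_apply, Equiv.Perm.inv_def, Equiv.symm_apply_apply]
        have hne : σ (c pq.1) ≠ σ (c pq.2) := fun he =>
          absurd (c.injective (σ.injective he)) (by omega)
        have hlt : pq.1 < pq.2 := hpq
        by_cases hs : σ (c pq.2) < σ (c pq.1)
        · have : ¬ σ (c pq.1) < σ (c pq.2) := by omega
          simp only [hs, if_true, this, if_false, hlt, if_true, one_mul]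
          rw [mul_comm (d (σ (c pq.2)))]
        · have : σ (c pq.1) < σ (c pq.2) := by omega
          simp only [hs, if_false, this, if_true, hlt, if_true]
          rw [mul_comm (d (σ (c pq.2))), sgn.sq]
  rw [key, Finset.prod_mul_distrib]
  congr 1
  rw [Finset.prod_filter, Finset.prod_filter]
  apply Finset.prod_congr rfl
  intro pq _
  by_cases h1 : pq.1 < pq.2 <;> by_cases h2 : c⁻¹ pq.2 < c⁻¹ pq.1 <;> simp [h1, h2]

/-! ### the cycle -/

def cycF (j k : ℕ) (m : ℕ) : ℕ :=
  if m = j+1 then j+k+2 else if j+2 ≤ m ∧ m ≤ j+k+2 then m-1 else m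

def cycG (j k : ℕ) (m : ℕ) : ℕ :=
  if m = j+k+2 then j+1 else if j+1 ≤ m ∧ m ≤ j+k+1 then m+1 else m

def cyc (n j k : ℕ) (h : j + k + 2 ≤ n) : Equiv.Perm (Fin (n+1)) where
  toFun x := ⟨cycF j k x.val, by
    have := x.isLt; unfold cycF; split_ifs <;> omega⟩
  invFun x := ⟨cycG j k x.val, by
    have := x.isLt; unfold cycG; split_ifs <;> omega⟩
  left_inv x := by
    apply Fin.ext
    simp only [cycF, cycG]
    split_ifs <;> omega
  right_inv x := by
    apply Fin.ext
    simp only [cycF, cycG]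
    split_ifs <;> omega

lemma cyc_val (n j k : ℕ) (h : j + k + 2 ≤ n) (x : Fin (n+1)) :
    (cyc n j k h x).val = cycF j k x.val := rfl

lemma cyc_inv_val (n j k : ℕ) (h : j + k + 2 ≤ n) (x : Fin (n+1)) :
    ((cyc n j k h)⁻¹ x).val = cycG j k x.val := rfl

lemma val_natCast (n m : ℕ) (hm : m ≤ n) : ((m : Fin (n+1))).val = m :=
  Fin.val_cast_of_lt (by omega)

lemma cyc_natCast (n j k : ℕ) (h : j + k + 2 ≤ n) (m : ℕ) (hm : m ≤ n) :
    cyc n j k h (m : Fin (n+1)) = ((cycF j k m : ℕ) : Fin (n+1)) := by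
  apply Fin.ext
  rw [cyc_val, val_natCast n m hm, val_natCast]
  unfold cycF; split_ifs <;> omega

lemma cyc_inv_filter (n j k : ℕ) (h : j + k + 2 ≤ n) :
    Finset.univ.filter (fun pq : Fin (n+1) × Fin (n+1) =>
      pq.1 < pq.2 ∧ (cyc n j k h)⁻¹ pq.2 < (cyc n j k h)⁻¹ pq.1)
    = (Finset.Icc (j+1) (j+k+1)).image
        (fun m : ℕ => ((m : Fin (n+1)), ((j+k+2 : ℕ) : Fin (n+1)))) := by
  ext pq
  simp only [Finset.mem_filter, Finset.mem_univ, true_and, Finset.mem_image,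
    Finset.mem_Icc, Fin.lt_def, cyc_inv_val]
  constructor
  · rintro ⟨h1, h2⟩
    refine ⟨pq.1.val, ?_, ?_⟩
    · have h2' := h2
      unfold cycG at h2'
      have i1 := pq.1.isLt
      have i2 := pq.2.isLt
      split_ifs at h2' <;> omega
    · have hs : pq.2.val = j+k+2 := by
        have h2' := h2
        unfold cycG at h2'
        have i1 := pq.1.isLt
        have i2 := pq.2.isLt
        split_ifs at h2' <;> omega
      have e1 : ((pq.1.val : ℕ) : Fin (n+1)) = pq.1 := Fin.cast_val_eq_self pq.1
      have e2 : (((j+k+2 : ℕ)) : Fin (n+1)) = pq.2 := by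
        apply Fin.ext
        rw [val_natCast n _ (by omega), hs]
      rw [e1, e2]
  · rintro ⟨m, ⟨hm1, hm2⟩, rfl⟩
    have v1 : ((m : Fin (n+1))).val = m := val_natCast n m (by omega)
    have v2 : (((j+k+2:ℕ) : Fin (n+1))).val = j+k+2 := val_natCast n _ (by omega)
    simp only [v1, v2]
    unfold cycG
    constructor
    · omega
    · split_ifs <;> omega

lemma sgn_prod {ι : Type*} (s : Finset ι) (f : ι → ℤ) :
    ∏ i ∈ s, (-1:ℚ)^(f i) = (-1:ℚ)^(∑ i ∈ s, f i) := by
  induction s using Finset.cons_induction with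
  | empty => simp
  | cons a s ha ih =>
      rw [Finset.prod_cons, Finset.sum_cons, ih, ← zpow_add₀ (by norm_num : (-1:ℚ) ≠ 0)]

lemma cyc_sign_prod (n j k : ℕ) (h : j + k + 2 ≤ n) (d : Fin (n+1) → ℤ)
    (σ : Equiv.Perm (Fin (n+1))) :
    ∏ pq ∈ Finset.univ.filter
      (fun pq : Fin (n+1) × Fin (n+1) =>
        pq.1 < pq.2 ∧ (cyc n j k h)⁻¹ pq.2 < (cyc n j k h)⁻¹ pq.1),
      (-1 : ℚ) ^ (d (σ pq.1) * d (σ pq.2))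
    = (-1:ℚ) ^ ((∑ m ∈ Finset.Icc (j+1) (j+k+1), d (σ (m : Fin (n+1)))) *
        d (σ ((j+k+2 : ℕ) : Fin (n+1)))) := by
  rw [cyc_inv_filter, Finset.prod_image, Finset.sum_mul, ← sgn_prod]
  intro x hx y hy hxy
  simp only [Finset.mem_coe, Finset.mem_Icc] at hx hy
  have h1 : ((x : Fin (n+1))) = ((y : Fin (n+1))) := congrArg Prod.fst hxy
  have : ((x : Fin (n+1))).val = ((y : Fin (n+1))).val := by rw [h1]
  rwa [val_natCast n x (by omega), val_natCast n y (by omega)] at this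

/-! ### the summand -/

noncomputable def Zsummand (br : V →ₗ[ℚ] V →ₗ[ℚ] V) (δ : V →ₗ[ℚ] V)
    (n : ℕ) (d : Fin (n + 1) → ℤ) (a : Fin (n + 1) → V) (j k : ℕ)
    (σ : Equiv.Perm (Fin (n + 1))) : V :=
  (koszulSgn n d σ *
      (-1 : ℚ) ^ (∑ m ∈ Finset.Icc 1 j, d (σ (m : Fin (n + 1))))) •
    iterBr br
      (br (iterBr br (if d (σ 0) = 1 then δ (a (σ 0)) else 0)
              (fun m => a (σ (m : Fin (n + 1)))) 1 j)
          (iterBr br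
            (if d (σ ((j + 1 : ℕ) : Fin (n + 1))) = 1
              then δ (a (σ ((j + 1 : ℕ) : Fin (n + 1)))) else 0)
            (fun m => a (σ (m : Fin (n + 1)))) (j + 2) k))
      (fun m => a (σ (m : Fin (n + 1)))) (j + k + 2) (n - (j + k + 1))

lemma Zval_eq_sum (br : V →ₗ[ℚ] V →ₗ[ℚ] V) (δ : V →ₗ[ℚ] V)
    (n : ℕ) (d : Fin (n + 1) → ℤ) (a : Fin (n + 1) → V) (j k : ℕ) :
    Zval br δ n d a j k = ∑ σ : Equiv.Perm (Fin (n + 1)), Zsummand br δ n d a j k σ := rfl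


lemma cycF_low (j k m : ℕ) (h : m ≤ j) : cycF j k m = m := by
  unfold cycF; split_ifs <;> omega
lemma cycF_j1 (j k : ℕ) : cycF j k (j+1) = j+k+2 := by
  unfold cycF; split_ifs <;> omega
lemma cycF_mid (j k m : ℕ) (h1 : j+2 ≤ m) (h2 : m ≤ j+k+2) : cycF j k m = m-1 := by
  unfold cycF; split_ifs <;> omega
lemma cycF_high (j k m : ℕ) (h : j+k+3 ≤ m) : cycF j k m = m := by
  unfold cycF; split_ifs <;> omega

lemma mulC_natCast (n j k : ℕ) (h : j + k + 2 ≤ n) (σ : Equiv.Perm (Fin (n+1)))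
    (m : ℕ) (hm : m ≤ n) :
    (σ * cyc n j k h) ((m : ℕ) : Fin (n+1)) = σ ((cycF j k m : ℕ) : Fin (n+1)) := by
  rw [Equiv.Perm.mul_apply, cyc_natCast n j k h m hm]

lemma mulC_zero (n j k : ℕ) (h : j + k + 2 ≤ n) (σ : Equiv.Perm (Fin (n+1))) :
    (σ * cyc n j k h) 0 = σ 0 := by
  have h0 : ((0:ℕ) : Fin (n+1)) = 0 := by simp
  rw [← h0, mulC_natCast n j k h σ 0 (by omega), cycF_low j k 0 (by omega), h0]

lemma match1 (br : V →ₗ[ℚ] V →ₗ[ℚ] V) (δ : V →ₗ[ℚ] V) (n : ℕ) (d : Fin (n+1) → ℤ)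
    (a : Fin (n+1) → V) (j k : ℕ) (σ : Equiv.Perm (Fin (n+1))) :
    Zsummand br δ n d a j (k+1) σ
      = (koszulSgn n d σ * (-1:ℚ)^(∑ m ∈ Finset.Icc 1 j, d (σ (m : Fin (n+1))))) •
        iterBr br
          (br (iterBr br (if d (σ 0) = 1 then δ (a (σ 0)) else 0)
                  (fun m => a (σ (m : Fin (n+1)))) 1 j)
              (br (iterBr br (if d (σ ((j+1:ℕ) : Fin (n+1))) = 1
                      then δ (a (σ ((j+1:ℕ) : Fin (n+1)))) else 0)
                    (fun m => a (σ (m : Fin (n+1)))) (j+2) k)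
                  (a (σ ((j+k+2:ℕ) : Fin (n+1))))))
          (fun m => a (σ (m : Fin (n+1)))) (j+k+3) (n-(j+k+2)) := by
  simp only [Zsummand]
  rw [show j+(k+1)+2 = j+k+3 from by omega, show n-(j+(k+1)+1) = n-(j+k+2) from by omega,
      iterBr.succ_len, show (j+2)+k = j+k+2 from by omega]

lemma match2 (br : V →ₗ[ℚ] V →ₗ[ℚ] V) (δ : V →ₗ[ℚ] V) (n : ℕ) (d : Fin (n+1) → ℤ)
    (a : Fin (n+1) → V) (j k : ℕ) (hc2 : j + k + 2 ≤ n) (σ : Equiv.Perm (Fin (n+1))) :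
    Zsummand br δ n d a (j+1) k (σ * cyc n j k hc2)
      = (koszulSgn n d σ * (-1:ℚ)^(∑ m ∈ Finset.Icc 1 j, d (σ (m : Fin (n+1)))) *
          (-1:ℚ)^((∑ m ∈ Finset.Icc (j+2) (j+k+1), d (σ (m : Fin (n+1)))) *
            d (σ ((j+k+2:ℕ) : Fin (n+1))))) •
        iterBr br
          (br (br (iterBr br (if d (σ 0) = 1 then δ (a (σ 0)) else 0)
                    (fun m => a (σ (m : Fin (n+1)))) 1 j)
                  (a (σ ((j+k+2:ℕ) : Fin (n+1)))))
              (iterBr br (if d (σ ((j+1:ℕ) : Fin (n+1))) = 1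
                      then δ (a (σ ((j+1:ℕ) : Fin (n+1)))) else 0)
                  (fun m => a (σ (m : Fin (n+1)))) (j+2) k))
          (fun m => a (σ (m : Fin (n+1)))) (j+k+3) (n-(j+k+2)) := by
  simp only [Zsummand]
  -- scalar part
  have hkos : koszulSgn n d (σ * cyc n j k hc2)
      = koszulSgn n d σ * (-1:ℚ)^((∑ m ∈ Finset.Icc (j+1) (j+k+1), d (σ (m : Fin (n+1)))) *
          d (σ ((j+k+2:ℕ) : Fin (n+1)))) := by
    rw [koszulSgn_mul, cyc_sign_prod]
  have hsum1 : ∑ m ∈ Finset.Icc 1 (j+1), d ((σ * cyc n j k hc2) (m : Fin (n+1)))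
      = (∑ m ∈ Finset.Icc 1 j, d (σ (m : Fin (n+1)))) + d (σ ((j+k+2:ℕ) : Fin (n+1))) := by
    rw [Finset.sum_Icc_succ_top (by omega : 1 ≤ j + 1)]
    congr 1
    · apply Finset.sum_congr rfl
      intro m hm
      simp only [Finset.mem_Icc] at hm
      rw [mulC_natCast n j k hc2 σ m (by omega), cycF_low j k m (by omega)]
    · rw [mulC_natCast n j k hc2 σ (j+1) (by omega), cycF_j1 j k]
  -- body part
  have hX : iterBr br (if d ((σ * cyc n j k hc2) 0) = 1
        then δ (a ((σ * cyc n j k hc2) 0)) else 0)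
        (fun m => a ((σ * cyc n j k hc2) (m : Fin (n+1)))) 1 (j+1)
      = br (iterBr br (if d (σ 0) = 1 then δ (a (σ 0)) else 0)
              (fun m => a (σ (m : Fin (n+1)))) 1 j)
          (a (σ ((j+k+2:ℕ) : Fin (n+1)))) := by
    rw [iterBr.succ_len, mulC_zero n j k hc2 σ]
    have h1 : iterBr br (if d (σ 0) = 1 then δ (a (σ 0)) else 0)
        (fun m => a ((σ * cyc n j k hc2) (m : Fin (n+1)))) 1 j
        = iterBr br (if d (σ 0) = 1 then δ (a (σ 0)) else 0)
        (fun m => a (σ (m : Fin (n+1)))) 1 j := by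
      apply iterBr.congr
      intro i hi
      rw [mulC_natCast n j k hc2 σ (1+i) (by omega), cycF_low j k (1+i) (by omega)]
    have h2 : a ((σ * cyc n j k hc2) ((1+j : ℕ) : Fin (n+1)))
        = a (σ ((j+k+2:ℕ) : Fin (n+1))) := by
      rw [mulC_natCast n j k hc2 σ (1+j) (by omega),
        show cycF j k (1+j) = j+k+2 from by rw [show 1+j = j+1 from by omega, cycF_j1]]
    rw [h1, h2]
  have hY : iterBr br (if d ((σ * cyc n j k hc2) ((j+1+1:ℕ) : Fin (n+1))) = 1
        then δ (a ((σ * cyc n j k hc2) ((j+1+1:ℕ) : Fin (n+1)))) else 0)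
        (fun m => a ((σ * cyc n j k hc2) (m : Fin (n+1)))) (j+1+2) k
      = iterBr br (if d (σ ((j+1:ℕ) : Fin (n+1))) = 1
              then δ (a (σ ((j+1:ℕ) : Fin (n+1)))) else 0)
          (fun m => a (σ (m : Fin (n+1)))) (j+2) k := by
    rw [mulC_natCast n j k hc2 σ (j+1+1) (by omega),
      show cycF j k (j+1+1) = j+1 from by unfold cycF; split_ifs <;> omega]
    apply iterBr.congr
    intro i hi
    rw [mulC_natCast n j k hc2 σ (j+1+2+i) (by omega),
      cycF_mid j k (j+1+2+i) (by omega) (by omega),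
      show j+1+2+i-1 = j+2+i from by omega]
  have houter : ∀ (t : V), iterBr br t
        (fun m => a ((σ * cyc n j k hc2) (m : Fin (n+1)))) (j+1+k+2) (n-(j+1+k+1))
      = iterBr br t (fun m => a (σ (m : Fin (n+1)))) (j+k+3) (n-(j+k+2)) := by
    intro t
    rw [show j+1+k+2 = j+k+3 from by omega, show n-(j+1+k+1) = n-(j+k+2) from by omega]
    apply iterBr.congr
    intro i hi
    rw [mulC_natCast n j k hc2 σ (j+k+3+i) (by omega), cycF_high j k (j+k+3+i) (by omega)]
  rw [hkos, hsum1, hX, hY, houter]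
  -- scalar equality or zero
  by_cases hD : d (σ ((j+1:ℕ) : Fin (n+1))) = 1
  · have hsplit : ∑ m ∈ Finset.Icc (j+1) (j+k+1), d (σ (m : Fin (n+1)))
        = 1 + ∑ m ∈ Finset.Icc (j+2) (j+k+1), d (σ (m : Fin (n+1))) := by
      rw [show Finset.Icc (j+1) (j+k+1) = insert (j+1) (Finset.Icc (j+2) (j+k+1)) from by
          ext x; simp only [Finset.mem_Icc, Finset.mem_insert]; omega,
        Finset.sum_insert (by simp only [Finset.mem_Icc]; omega), hD]
    rw [hsplit]
    rw [mul_assoc, mul_assoc, sgn.mul, sgn.mul]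
    congr 1
    exact congrArg (HMul.hMul (koszulSgn n d σ))
      (sgn.congr' _ _ ⟨d (σ ((j+k+2:ℕ) : Fin (n+1))), by ring⟩)
  · rw [if_neg hD, iterBr.zero, map_zero, iterBr.zero, smul_zero, smul_zero]

lemma head_identity (H : ℤ → Submodule ℚ V) (br : V →ₗ[ℚ] V →ₗ[ℚ] V)
    (hbr_mem : ∀ {i j : ℤ} {a b : V}, a ∈ H i → b ∈ H j → br a b ∈ H (i + j))
    (hanti : ∀ {i j : ℤ} {a b : V}, a ∈ H i → b ∈ H j →
      br a b = -((-1 : ℚ) ^ (i * j) • br b a))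
    (hjac : ∀ {i j : ℤ} {a b : V}, a ∈ H i → b ∈ H j → ∀ c : V,
      br a (br b c) = br (br a b) c + (-1 : ℚ) ^ (i * j) • br b (br a c))
    {X Y e : V} {SX SY de : ℤ} (hX : X ∈ H SX) (hY : Y ∈ H SY) (he : e ∈ H de) :
    br (br X Y) e = br X (br Y e) + (-1:ℚ)^(SY * de) • br (br X e) Y := by
  have j1 := hjac hX hY e
  have h1 : br (br X Y) e = br X (br Y e) - (-1:ℚ)^(SX*SY) • br Y (br X e) := by
    rw [j1, add_sub_cancel_right]
  rw [hanti hY (hbr_mem hX he), smul_neg, sub_neg_eq_add, smul_smul] at h1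
  have hs : (-1:ℚ)^(SX*SY) * (-1:ℚ)^(SY*(SX+de)) = (-1:ℚ)^(SY*de) := by
    rw [sgn.mul]
    exact sgn.congr' _ _ ⟨SX*SY, by ring⟩
  rw [hs] at h1
  exact h1

lemma key_lemma (H : ℤ → Submodule ℚ V) (br : V →ₗ[ℚ] V →ₗ[ℚ] V) (δ : V →ₗ[ℚ] V)
    (hbr_mem : ∀ {i j : ℤ} {a b : V}, a ∈ H i → b ∈ H j → br a b ∈ H (i + j))
    (hδ_mem : ∀ {i : ℤ} {a : V}, a ∈ H i → δ a ∈ H (i - 1))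
    (hanti : ∀ {i j : ℤ} {a b : V}, a ∈ H i → b ∈ H j →
      br a b = -((-1 : ℚ) ^ (i * j) • br b a))
    (hjac : ∀ {i j : ℤ} {a b : V}, a ∈ H i → b ∈ H j → ∀ c : V,
      br a (br b c) = br (br a b) c + (-1 : ℚ) ^ (i * j) • br b (br a c))
    (n : ℕ) (d : Fin (n + 1) → ℤ) (a : Fin (n + 1) → V)
    (ha : ∀ p, a p ∈ H (d p))
    (j k : ℕ) (hc2 : j + k + 2 ≤ n) (σ : Equiv.Perm (Fin (n + 1))) :
    Zsummand br δ n d a j k σ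
      = Zsummand br δ n d a (j+1) k (σ * cyc n j k hc2) + Zsummand br δ n d a j (k+1) σ := by
  rw [match2 br δ n d a j k hc2 σ, match1 br δ n d a j k σ]
  simp only [Zsummand]
  rw [show n - (j+k+1) = (n - (j+k+2)) + 1 from by omega, iterBr.cons_len,
      show (j+k+2)+1 = j+k+3 from by omega]
  have hbase0 : (if d (σ 0) = 1 then δ (a (σ 0)) else 0) ∈ H 0 := by
    split_ifs with h
    · simpa [h] using hδ_mem (ha (σ 0))
    · exact Submodule.zero_mem _
  have hbase1 : (if d (σ ((j+1:ℕ) : Fin (n+1))) = 1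
      then δ (a (σ ((j+1:ℕ) : Fin (n+1)))) else 0) ∈ H 0 := by
    split_ifs with h
    · have h2 := hδ_mem (ha (σ ((j+1:ℕ) : Fin (n+1))))
      rw [h, show (1:ℤ) - 1 = 0 from by norm_num] at h2
      exact h2
    · exact Submodule.zero_mem _
  have hX : iterBr br (if d (σ 0) = 1 then δ (a (σ 0)) else 0)
      (fun m => a (σ (m : Fin (n+1)))) 1 j
      ∈ H (∑ m ∈ Finset.Icc 1 j, d (σ (m : Fin (n+1)))) := by
    have h1 := iterBr.mem br H hbr_mem _ (fun m => a (σ (m : Fin (n+1))))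
        (fun m => d (σ (m : Fin (n+1)))) 1 j 0 hbase0 (fun i _ => ha _)
    rwa [zero_add, show 1+j = j+1 from by omega, Finset.Ico_add_one_right_eq_Icc] at h1
  have hY : iterBr br (if d (σ ((j+1:ℕ) : Fin (n+1))) = 1
        then δ (a (σ ((j+1:ℕ) : Fin (n+1)))) else 0)
      (fun m => a (σ (m : Fin (n+1)))) (j+2) k
      ∈ H (∑ m ∈ Finset.Icc (j+2) (j+k+1), d (σ (m : Fin (n+1)))) := by
    have h1 := iterBr.mem br H hbr_mem _ (fun m => a (σ (m : Fin (n+1))))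
        (fun m => d (σ (m : Fin (n+1)))) (j+2) k 0 hbase1 (fun i _ => ha _)
    rwa [zero_add, show (j+2)+k = (j+k+1)+1 from by omega, Finset.Ico_add_one_right_eq_Icc] at h1
  have he : a (σ ((j+k+2:ℕ) : Fin (n+1))) ∈ H (d (σ ((j+k+2:ℕ) : Fin (n+1)))) := ha _
  rw [head_identity H br hbr_mem hanti hjac hX hY he, iterBr.add, iterBr.smul,
    smul_add, smul_smul]
  exact add_comm _ _

/-- Getzler's Lemma 2, second part: `Z_{n,j,k} = Z_{n,j+1,k} + Z_{n,j,k+1}` for `j + k + 1 < n`, in any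
differential graded Lie algebra over `ℚ` with homogeneous elements
`a_0, …, a_n` of degrees `d_0, …, d_n`. -/
theorem stmt_14 (V : Type*) [AddCommGroup V] [Module ℚ V]
    (H : ℤ → Submodule ℚ V)
    (br : V →ₗ[ℚ] V →ₗ[ℚ] V) (δ : V →ₗ[ℚ] V)
    (hbr_mem : ∀ {i j : ℤ} {a b : V}, a ∈ H i → b ∈ H j → br a b ∈ H (i + j))
    (hδ_mem : ∀ {i : ℤ} {a : V}, a ∈ H i → δ a ∈ H (i - 1))
    (hδδ : ∀ a : V, δ (δ a) = 0)
    (hanti : ∀ {i j : ℤ} {a b : V}, a ∈ H i → b ∈ H j →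
      br a b = -((-1 : ℚ) ^ (i * j) • br b a))
    (hjac : ∀ {i j : ℤ} {a b : V}, a ∈ H i → b ∈ H j → ∀ c : V,
      br a (br b c) = br (br a b) c + (-1 : ℚ) ^ (i * j) • br b (br a c))
    (hleib : ∀ {i : ℤ} {a : V}, a ∈ H i → ∀ b : V,
      δ (br a b) = br (δ a) b + (-1 : ℚ) ^ i • br a (δ b))
    (n : ℕ) (d : Fin (n + 1) → ℤ) (a : Fin (n + 1) → V)
    (ha : ∀ p, a p ∈ H (d p))
    (j k : ℕ) (hjk : j + k + 1 < n) :
    Zval br δ n d a j k = Zval br δ n d a (j + 1) k + Zval br δ n d a j (k + 1) := by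
  have hc2 : j + k + 2 ≤ n := by omega
  rw [Zval_eq_sum, Zval_eq_sum, Zval_eq_sum]
  calc ∑ σ : Equiv.Perm (Fin (n+1)), Zsummand br δ n d a j k σ
      = ∑ σ : Equiv.Perm (Fin (n+1)),
          (Zsummand br δ n d a (j+1) k (σ * cyc n j k hc2) + Zsummand br δ n d a j (k+1) σ) :=
        Finset.sum_congr rfl (fun σ _ =>
          key_lemma H br δ hbr_mem hδ_mem hanti hjac n d a ha j k hc2 σ)
    _ = (∑ σ : Equiv.Perm (Fin (n+1)), Zsummand br δ n d a (j+1) k (σ * cyc n j k hc2))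
        + ∑ σ : Equiv.Perm (Fin (n+1)), Zsummand br δ n d a j (k+1) σ :=
        Finset.sum_add_distrib
    _ = _ := by
        congr 1
        exact Fintype.sum_equiv (Equiv.mulRight (cyc n j k hc2)) _ _ (fun σ => rfl)

end
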